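/- The tail of the series ∑ (2m-1)!!/(2m+2)!! admits the closed form: for every n ≥ 0, ∑_{m=n+1}^∞ (2m-1)!!/(2m+2)!! = (1/2)_{n+1}/(n+1)!, and in particular ∑_{m=0}^∞ (2m-1)!!/(2m+2)!! = 1. -/

import Mathlib

open Filter Finset

noncomputable def dfc (N : ℕ) : ℝ :=
  (Nat.doubleFactorial (2 * N - 1) : ℝ) / (Nat.doubleFactorial (2 * N) : ℝ)

lemma df_pos (n : ℕ) : 0 < (Nat.doubleFactorial n : ℝ) := by
  exact_mod_cast Nat.doubleFactorial_pos n

lemma df_odd_succ (N : ℕ) :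
    Nat.doubleFactorial (2 * N + 1) = (2 * N + 1) * Nat.doubleFactorial (2 * N - 1) := by
  cases N with
  | zero => rfl
  | succ k =>
    have h1 : 2 * (k + 1) + 1 = (2 * k + 1) + 2 := by ring
    have h2 : 2 * (k + 1) - 1 = 2 * k + 1 := by omega
    rw [h1, h2, Nat.doubleFactorial_add_two]

lemma dfc_pos (N : ℕ) : 0 < dfc N := div_pos (df_pos _) (df_pos _)

lemma dfc_zero : dfc 0 = 1 := by simp [dfc, Nat.doubleFactorial]

lemma dfc_succ (N : ℕ) : dfc (N + 1) = dfc N * ((2 * N + 1) / (2 * N + 2)) := by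
  have h1 : 2 * (N + 1) - 1 = 2 * N + 1 := by omega
  have h2 : 2 * (N + 1) = 2 * N + 2 := by ring
  rw [dfc, dfc, h1, h2, df_odd_succ, Nat.doubleFactorial_add_two]
  push_cast
  rw [div_mul_div_comm]
  ring

lemma dfc_sq (N : ℕ) : dfc N ^ 2 * (2 * N + 1) ≤ 1 := by
  induction N with
  | zero => simp [dfc_zero]
  | succ k ih =>
    have hk : ((2:ℝ) * k + 2) ≠ 0 := by positivity
    have h : dfc (k + 1) * (2 * k + 2) = dfc k * (2 * k + 1) := by
      rw [dfc_succ]; field_simp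
    have h2 := congrArg (· ^ 2) h
    push_cast
    nlinarith [h2, ih, sq_nonneg (dfc (k + 1)), sq_nonneg (dfc k), (dfc_pos (k+1)).le,
      (dfc_pos k).le, sq_nonneg ((k:ℝ))]

lemma dfc_le (N : ℕ) : dfc N ≤ Real.sqrt (1 / (2 * N + 1)) := by
  rw [Real.le_sqrt (dfc_pos N).le]
  rw [le_div_iff₀ (by positivity)]
  · exact_mod_cast dfc_sq N
  · positivity

lemma dfc_tendsto : Tendsto dfc atTop (nhds 0) := by
  have h1 : Tendsto (fun N : ℕ => Real.sqrt (1 / (2 * N + 1))) atTop (nhds 0) := by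
    have h2 : Tendsto (fun N : ℕ => (1 : ℝ) / (2 * N + 1)) atTop (nhds 0) := by
      simp only [one_div]
      apply Tendsto.comp tendsto_inv_atTop_zero
      apply tendsto_atTop_add_const_right
      exact (tendsto_natCast_atTop_atTop).const_mul_atTop (by norm_num)
    simpa using h2.sqrt
  exact squeeze_zero (fun N => (dfc_pos N).le) dfc_le h1

lemma term_eq (m : ℕ) :
    (Nat.doubleFactorial (2 * m - 1) : ℝ) / (Nat.doubleFactorial (2 * m + 2) : ℝ)
      = dfc m - dfc (m + 1) := by
  rw [dfc_succ]
  rw [show (Nat.doubleFactorial (2 * m + 2)) = (2 * m + 2) * Nat.doubleFactorial (2 * m) from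
    Nat.doubleFactorial_add_two _]
  have hd : (Nat.doubleFactorial (2 * m) : ℝ) ≠ 0 := (df_pos _).ne'
  unfold dfc
  push_cast
  field_simp
  ring

lemma tail_hasSum (k : ℕ) :
    HasSum (fun m : ℕ =>
      (Nat.doubleFactorial (2 * (k + m) - 1) : ℝ) /
        (Nat.doubleFactorial (2 * (k + m) + 2) : ℝ)) (dfc k) := by
  have hnn : ∀ m : ℕ, 0 ≤ (Nat.doubleFactorial (2 * (k + m) - 1) : ℝ) /
      (Nat.doubleFactorial (2 * (k + m) + 2) : ℝ) := fun m => by positivity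
  rw [hasSum_iff_tendsto_nat_of_nonneg hnn]
  have heq : ∀ N : ℕ, ∑ i ∈ range N,
      (Nat.doubleFactorial (2 * (k + i) - 1) : ℝ) /
        (Nat.doubleFactorial (2 * (k + i) + 2) : ℝ) = dfc k - dfc (k + N) := by
    intro N
    have : ∀ i, (Nat.doubleFactorial (2 * (k + i) - 1) : ℝ) /
        (Nat.doubleFactorial (2 * (k + i) + 2) : ℝ)
        = dfc (k + i) - dfc (k + i + 1) := fun i => term_eq (k + i)
    rw [Finset.sum_congr rfl (fun i _ => this i)]
    exact Finset.sum_range_sub' (fun i => dfc (k + i)) N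
  simp only [heq]
  have : Tendsto (fun N : ℕ => dfc (k + N)) atTop (nhds 0) := by
    simpa [Nat.add_comm, Function.comp_def] using dfc_tendsto.comp (tendsto_add_atTop_nat k)
  simpa using (tendsto_const_nhds.sub this)

lemma dfc_poch (N : ℕ) :
    dfc N = (ascPochhammer ℝ N).eval (1 / 2 : ℝ) / (N.factorial : ℝ) := by
  induction N with
  | zero => simp [dfc_zero]
  | succ k ih =>
    rw [dfc_succ, ih, ascPochhammer_succ_eval, Nat.factorial_succ]
    have hk : (k.factorial : ℝ) ≠ 0 := by positivity
    push_cast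
    field_simp
    ring

/-- The tail of ∑ (2m-1)!!/(2m+2)!! is (1/2)_{n+1}/(n+1)!, and the full sum is 1. -/
theorem double_factorial_series_tail (n : ℕ) :
    (∑' m : ℕ,
        (Nat.doubleFactorial (2 * (n + 1 + m) - 1) : ℝ) /
          (Nat.doubleFactorial (2 * (n + 1 + m) + 2) : ℝ)
      = (ascPochhammer ℝ (n + 1)).eval (1 / 2 : ℝ) / ((n + 1).factorial : ℝ)) ∧
    (∑' m : ℕ,
        (Nat.doubleFactorial (2 * m - 1) : ℝ) /
          (Nat.doubleFactorial (2 * m + 2) : ℝ) = 1) := by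
  constructor
  · rw [(tail_hasSum (n + 1)).tsum_eq, dfc_poch]
  · have h := tail_hasSum 0
    simp only [Nat.zero_add, zero_add] at h
    rw [h.tsum_eq, dfc_zero]
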